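/- Let K be a differential field and equip K(y) with the derivation R' = R'_K + y·R_0·R_y, where R_0 ∈ K(y) has nonnegative order at y = 0 (this is the differential field obtained by adjoining a special transcendental element y with y' = y·R_0(y)). Then for every R ∈ K(y), ord(R') ≥ ord(R), where ord is the order of vanishing at y = 0. -/

import Mathlib

open scoped Classical

/-- The order of vanishing of a rational function at `y = 0` (with `ord 0 = ⊤`). -/
noncomputable def ordAt0 {K : Type*} [Field K] (R : RatFunc K) : WithTop ℤ :=
  if R = 0 then ⊤
  else ((Polynomial.rootMultiplicity 0 R.num : ℤ) - Polynomial.rootMultiplicity 0 R.denom : ℤ)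

namespace SpecAux

open Polynomial

variable {K : Type*} [Field K]

local notation "rm" p => Polynomial.rootMultiplicity 0 p

lemma Xpow_rm_dvd (p : K[X]) : X ^ (rm p) ∣ p := by
  simpa using pow_rootMultiplicity_dvd p 0

lemma ordAt0_ne_zero {a : RatFunc K} (ha : a ≠ 0) :
    ordAt0 a = (((rm a.num : ℤ) - (rm a.denom : ℤ) : ℤ) : WithTop ℤ) := by
  simp [ordAt0, ha]

lemma mul_denom (a : RatFunc K) :
    a * algebraMap K[X] (RatFunc K) a.denom = algebraMap K[X] (RatFunc K) a.num := by
  exact (eq_div_iff (RatFunc.algebraMap_ne_zero a.denom_ne_zero)).mp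
    (RatFunc.num_div_denom a).symm

lemma ord_eq_sub {a : RatFunc K} (ha : a ≠ 0) {p q : K[X]} (hp : p ≠ 0) (hq : q ≠ 0)
    (h : a * algebraMap K[X] (RatFunc K) q = algebraMap K[X] (RatFunc K) p) :
    ordAt0 a = (((rm p : ℤ) - (rm q : ℤ) : ℤ) : WithTop ℤ) := by
  have hnum : a.num ≠ 0 := RatFunc.num_ne_zero ha
  have hden : a.denom ≠ 0 := a.denom_ne_zero
  have hid : algebraMap K[X] (RatFunc K) (a.num * q) = algebraMap K[X] (RatFunc K) (p * a.denom) := by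
    rw [map_mul, map_mul, ← mul_denom a]
    rw [show a * algebraMap K[X] (RatFunc K) a.denom * algebraMap K[X] (RatFunc K) q
      = a * algebraMap K[X] (RatFunc K) q * algebraMap K[X] (RatFunc K) a.denom by ring, h]
  have hpoly : a.num * q = p * a.denom := RatFunc.algebraMap_injective K hid
  have h1 : (rm a.num) + (rm q) = (rm p) + (rm a.denom) := by
    rw [← Polynomial.rootMultiplicity_mul (mul_ne_zero hnum hq),
      ← Polynomial.rootMultiplicity_mul (mul_ne_zero hp hden), hpoly]
  rw [ordAt0_ne_zero ha]
  congr 1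
  omega

lemma ord_algebraMap {p : K[X]} (hp : p ≠ 0) :
    ordAt0 (algebraMap K[X] (RatFunc K) p) = ((rm p : ℤ) : WithTop ℤ) := by
  have := ord_eq_sub (a := algebraMap K[X] (RatFunc K) p)
    (by simpa using hp) hp (q := 1) one_ne_zero (by simp)
  rw [this]
  have : (rm (1 : K[X])) = 0 := by
    apply Polynomial.rootMultiplicity_eq_zero
    simp [Polynomial.IsRoot]
  rw [this]
  norm_num

lemma ordAt0_mul (a b : RatFunc K) : ordAt0 (a * b) = ordAt0 a + ordAt0 b := by
  by_cases ha : a = 0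
  · simp [ha, ordAt0]
  by_cases hb : b = 0
  · simp [hb, ordAt0]
  have hab : a * b ≠ 0 := mul_ne_zero ha hb
  have key := ord_eq_sub hab (p := a.num * b.num) (q := a.denom * b.denom)
    (mul_ne_zero (RatFunc.num_ne_zero ha) (RatFunc.num_ne_zero hb))
    (mul_ne_zero a.denom_ne_zero b.denom_ne_zero)
    (by rw [map_mul, show a * b * (algebraMap K[X] (RatFunc K) a.denom *
        algebraMap K[X] (RatFunc K) b.denom) = (a * algebraMap K[X] (RatFunc K) a.denom) *
        (b * algebraMap K[X] (RatFunc K) b.denom) by ring, mul_denom, mul_denom, map_mul])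
  rw [key, ordAt0_ne_zero ha, ordAt0_ne_zero hb, ← WithTop.coe_add]
  congr 1
  rw [Polynomial.rootMultiplicity_mul (mul_ne_zero (RatFunc.num_ne_zero ha) (RatFunc.num_ne_zero hb)),
    Polynomial.rootMultiplicity_mul (mul_ne_zero a.denom_ne_zero b.denom_ne_zero)]
  push_cast
  ring

lemma ordAt0_neg (a : RatFunc K) : ordAt0 (-a) = ordAt0 a := by
  by_cases ha : a = 0
  · simp [ha]
  have h1 : ordAt0 (-1 : RatFunc K) = ((0 : ℤ) : WithTop ℤ) := by
    have : ((-1 : RatFunc K)) = algebraMap K[X] (RatFunc K) (-1) := by simp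
    rw [this, ord_algebraMap (by norm_num)]
    have h2 : (rm (-1 : K[X])) = 0 := by
      apply Polynomial.rootMultiplicity_eq_zero
      simp [Polynomial.IsRoot]
    rw [h2]
    simp
  rw [show -a = (-1) * a by ring, ordAt0_mul, h1]
  simp

lemma min_le_ordAt0_add (a b : RatFunc K) : min (ordAt0 a) (ordAt0 b) ≤ ordAt0 (a + b) := by
  by_cases ha : a = 0
  · simpa [ha, ordAt0] using min_le_right _ (ordAt0 b)
  by_cases hb : b = 0
  · simpa [hb, ordAt0] using min_le_left (ordAt0 a) _
  by_cases hab : a + b = 0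
  · simp [hab, ordAt0]
  set p : K[X] := a.num * b.denom + b.num * a.denom with hpdef
  have hid : (a + b) * algebraMap K[X] (RatFunc K) (a.denom * b.denom)
      = algebraMap K[X] (RatFunc K) p := by
    rw [map_mul, hpdef, map_add, map_mul, map_mul,
      show (a + b) * (algebraMap K[X] (RatFunc K) a.denom * algebraMap K[X] (RatFunc K) b.denom)
        = (a * algebraMap K[X] (RatFunc K) a.denom) * algebraMap K[X] (RatFunc K) b.denom
        + (b * algebraMap K[X] (RatFunc K) b.denom) * algebraMap K[X] (RatFunc K) a.denom by ring,
      mul_denom, mul_denom]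
  have hp : p ≠ 0 := by
    intro h0
    rw [h0, map_zero] at hid
    exact hab (by
      have := mul_eq_zero.mp hid
      rcases this with h | h
      · exact h
      · exact absurd h (by simpa using mul_ne_zero a.denom_ne_zero b.denom_ne_zero))
  have key := ord_eq_sub hab hp (mul_ne_zero a.denom_ne_zero b.denom_ne_zero) hid
  have hrm : min ((rm a.num) + (rm b.denom)) ((rm b.num) + (rm a.denom)) ≤ (rm p) := by
    rw [Polynomial.le_rootMultiplicity_iff hp]
    simp only [map_zero, sub_zero]
    apply min_pow_dvd_add
    · rw [pow_add]
      exact mul_dvd_mul (Xpow_rm_dvd _) (Xpow_rm_dvd _)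
    · rw [pow_add]
      exact mul_dvd_mul (Xpow_rm_dvd _) (Xpow_rm_dvd _)
  rw [key, ordAt0_ne_zero ha, ordAt0_ne_zero hb,
    Polynomial.rootMultiplicity_mul (mul_ne_zero a.denom_ne_zero b.denom_ne_zero),
    ← WithTop.coe_min, WithTop.coe_le_coe]
  simp only [min_le_iff] at hrm ⊢
  omega

/-- coefficientwise application of `dK`. -/
noncomputable def cdMap (dK : K → K) (p : K[X]) : K[X] :=
  p.sum fun n a => Polynomial.C (dK a) * Polynomial.X ^ n

lemma coeff_cdMap (dK : K → K) (h0 : dK 0 = 0) (p : K[X]) (k : ℕ) :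
    (cdMap dK p).coeff k = dK (p.coeff k) := by
  rw [cdMap, Polynomial.sum_def, Polynomial.finset_sum_coeff]
  simp only [Polynomial.coeff_C_mul, Polynomial.coeff_X_pow, mul_ite, mul_one, mul_zero]
  rw [Finset.sum_ite_eq p.support k (fun n => dK (p.coeff n))]
  split
  · rfl
  · rw [Polynomial.notMem_support_iff.mp (by assumption), h0]


lemma cd_add (dK : K → K) (h0 : dK 0 = 0) (hA : ∀ a b, dK (a + b) = dK a + dK b)
    (p q : K[X]) : cdMap dK (p + q) = cdMap dK p + cdMap dK q := by
  ext k
  simp [coeff_cdMap dK h0, hA]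

lemma cd_C_mul_X_pow (dK : K → K) (h0 : dK 0 = 0) (c : K) (n : ℕ) :
    cdMap dK (Polynomial.C c * Polynomial.X ^ n) = Polynomial.C (dK c) * Polynomial.X ^ n := by
  ext k
  rw [coeff_cdMap dK h0]
  simp only [Polynomial.coeff_C_mul, Polynomial.coeff_X_pow, mul_ite, mul_one, mul_zero]
  split <;> simp [h0]

lemma ordAt0_X : ordAt0 (RatFunc.X : RatFunc K) = ((1 : ℤ) : WithTop ℤ) := by
  rw [← RatFunc.algebraMap_X, ord_algebraMap Polynomial.X_ne_zero]
  have : (rm (Polynomial.X : K[X])) = 1 := by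
    rw [show (Polynomial.X : K[X]) = Polynomial.X - Polynomial.C 0 by simp]
    exact Polynomial.rootMultiplicity_X_sub_C_self
  rw [this]
  norm_num

lemma ordAt0_zero : ordAt0 (0 : RatFunc K) = ⊤ := by simp [ordAt0]

end SpecAux

open SpecAux Polynomial

/-- In the differential field `K⟨y⟩ ≅ K(y)` obtained by adjoining a special transcendental
element `y` with `y' = y·R₀(y)` where `ord R₀ ≥ 0` (derivation `R' = R'_K + y R₀ R_y`),
the derivative does not decrease the order at `y = 0`: `ord(R') ≥ ord R`. -/
theorem special_derivation_order_nondecreasing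
    {K : Type*} [Field K] [CharZero K] (dK : K → K)
    (hKadd : ∀ a b, dK (a + b) = dK a + dK b)
    (hKmul : ∀ a b, dK (a * b) = dK a * b + a * dK b)
    (R₀ : RatFunc K) (hR₀ : 0 ≤ ordAt0 R₀)
    (D : RatFunc K → RatFunc K)
    (hadd : ∀ a b, D (a + b) = D a + D b)
    (hmul : ∀ a b, D (a * b) = D a * b + a * D b)
    (hC : ∀ c : K, D (RatFunc.C c) = RatFunc.C (dK c))
    (hX : D RatFunc.X = RatFunc.X * R₀) :
    ∀ R : RatFunc K, ordAt0 R ≤ ordAt0 (D R) := by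
  have hd0 : dK 0 = 0 := by have := hKadd 0 0; simpa using this
  have D0 : D 0 = 0 := by have := hadd 0 0; simp at this; exact this
  have D1 : D 1 = 0 := by
    have := hmul 1 1
    simpa using this
  have DXpow : ∀ n : ℕ, D (RatFunc.X ^ n) = (n : RatFunc K) * RatFunc.X ^ n * R₀ := by
    intro n
    induction n with
    | zero => simpa using D1
    | succ n ih =>
      rw [pow_succ, hmul, ih, hX]
      push_cast
      ring
  have key : ∀ p : K[X], D (algebraMap K[X] (RatFunc K) p)
      = algebraMap K[X] (RatFunc K) (cdMap dK p)
        + algebraMap K[X] (RatFunc K) (Polynomial.derivative p) * RatFunc.X * R₀ := by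
    intro p
    induction p using Polynomial.induction_on' with
    | add p q hp hq =>
      rw [map_add, hadd, hp, hq, cd_add dK hd0 hKadd, derivative_add, map_add, map_add]
      ring
    | monomial n c =>
      rw [← Polynomial.C_mul_X_pow_eq_monomial, map_mul, map_pow, RatFunc.algebraMap_C,
        RatFunc.algebraMap_X, hmul, hC, DXpow, cd_C_mul_X_pow dK hd0,
        Polynomial.derivative_C_mul, Polynomial.derivative_X_pow]
      simp only [map_mul, map_pow, RatFunc.algebraMap_C, RatFunc.algebraMap_X]
      have hx : (n : RatFunc K) * RatFunc.X ^ n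
          = RatFunc.C ((n : K)) * RatFunc.X ^ (n - 1) * RatFunc.X := by
        cases n with
        | zero => simp
        | succ m =>
          rw [map_natCast, Nat.succ_sub_one, mul_assoc, ← pow_succ]
      rw [hx]
      ring
  have hbound : ∀ p : K[X], p ≠ 0 →
      ((Polynomial.rootMultiplicity 0 p : ℤ) : WithTop ℤ)
        ≤ ordAt0 (D (algebraMap K[X] (RatFunc K) p)) := by
    intro p hp
    rw [key p]
    refine le_trans (le_min ?_ ?_) (min_le_ordAt0_add _ _)
    · by_cases hcd : cdMap dK p = 0
      · rw [hcd, map_zero, ordAt0_zero]; exact le_top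
      · rw [ord_algebraMap hcd, WithTop.coe_le_coe, Int.ofNat_le]
        rw [Polynomial.le_rootMultiplicity_iff hcd]
        simp only [map_zero, sub_zero]
        rw [Polynomial.X_pow_dvd_iff]
        intro d hd
        rw [coeff_cdMap dK hd0]
        have : p.coeff d = 0 := by
          have hdvd := Xpow_rm_dvd p
          exact Polynomial.X_pow_dvd_iff.mp hdvd d hd
        rw [this, hd0]
    · by_cases hdp : Polynomial.derivative p = 0
      · rw [hdp, map_zero, zero_mul, zero_mul, ordAt0_zero]; exact le_top
      by_cases hr0 : R₀ = 0
      · rw [hr0, mul_zero, ordAt0_zero]; exact le_top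
      rw [ordAt0_mul, ordAt0_mul, ord_algebraMap hdp, ordAt0_X, ordAt0_ne_zero hr0]
      rw [ordAt0_ne_zero hr0] at hR₀
      set z : ℤ := (Polynomial.rootMultiplicity 0 R₀.num : ℤ)
        - (Polynomial.rootMultiplicity 0 R₀.denom : ℤ) with hz
      have hz0 : (0 : ℤ) ≤ z := by exact_mod_cast hR₀
      have hnat : Polynomial.rootMultiplicity 0 p - 1
          ≤ Polynomial.rootMultiplicity 0 (Polynomial.derivative p) :=
        Polynomial.rootMultiplicity_sub_one_le_derivative_rootMultiplicity p 0
      rw [← WithTop.coe_add, ← WithTop.coe_add, WithTop.coe_le_coe]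
      omega
  intro R
  by_cases hR : R = 0
  · rw [hR, D0]
  by_cases hDR : D R = 0
  · rw [hDR, ordAt0_zero]; exact le_top
  have hq : R.denom ≠ 0 := R.denom_ne_zero
  have hp : R.num ≠ 0 := RatFunc.num_ne_zero hR
  set qh := algebraMap K[X] (RatFunc K) R.denom with hqhdef
  have hid : D R * (qh * qh)
      = D (algebraMap K[X] (RatFunc K) R.num) * qh
        - algebraMap K[X] (RatFunc K) R.num * D qh := by
    have h1 : algebraMap K[X] (RatFunc K) R.num = R * qh := (mul_denom R).symm
    rw [h1, hmul]
    ring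
  have hordq : ordAt0 qh = ((Polynomial.rootMultiplicity 0 R.denom : ℤ) : WithTop ℤ) :=
    ord_algebraMap hq
  set m : ℤ := (Polynomial.rootMultiplicity 0 R.num : ℤ) with hm
  set k : ℤ := (Polynomial.rootMultiplicity 0 R.denom : ℤ) with hk
  have hbig : ((m + k : ℤ) : WithTop ℤ) ≤ ordAt0 (D R * (qh * qh)) := by
    rw [hid, sub_eq_add_neg]
    refine le_trans (le_min ?_ ?_) (min_le_ordAt0_add _ _)
    · rw [ordAt0_mul, hordq, WithTop.coe_add]
      exact add_le_add_left (hbound R.num hp) _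
    · rw [ordAt0_neg, ordAt0_mul, ord_algebraMap hp, WithTop.coe_add]
      exact add_le_add_right (hbound R.denom hq) _
  rw [ordAt0_mul, ordAt0_mul, hordq] at hbig
  rw [ordAt0_ne_zero hDR] at hbig ⊢
  rw [ordAt0_ne_zero hR]
  set n : ℤ := (Polynomial.rootMultiplicity 0 (D R).num : ℤ)
    - (Polynomial.rootMultiplicity 0 (D R).denom : ℤ) with hn
  rw [← WithTop.coe_add, ← WithTop.coe_add, WithTop.coe_le_coe] at hbig
  rw [WithTop.coe_le_coe]
  omega
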